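/- arXiv:1709.07157 — 5 statements merged into one kernel-verified Lean document; each statement's English description precedes it below -/
import Mathlib

section
/- Let Q : ℝ → Matrix (Fin 3) (Fin 3) ℝ solve dQ/dt = WQ - QW - (aQ - b(Q² - (1/3)|Q|² Id) + c Q |Q|²), and let B(t) = exp(tW). Then U(t) := B(t)ᵀ Q(t) B(t) solves dU/dt = -(aU - b(U² - (1/3)|U|² Id) + c U |U|²). -/
open Matrix

noncomputable def Wmat : Matrix (Fin 3) (Fin 3) ℝ :=
  !![0, 1, 0; -1, 0, 0; 0, 0, 0]

/-- The gradient of the Landau–de Gennes bulk potential,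
`∂F/∂Q = aQ - b(Q² - (1/3)|Q|² Id) + c Q |Q|²`, where `|Q|² = tr(Q²)`. -/
noncomputable def gradF (a b c : ℝ) (Q : Matrix (Fin 3) (Fin 3) ℝ) :
    Matrix (Fin 3) (Fin 3) ℝ :=
  a • Q - b • (Q * Q - ((1 / 3 : ℝ) * Matrix.trace (Q * Q)) • (1 : Matrix (Fin 3) (Fin 3) ℝ))
    + (c * Matrix.trace (Q * Q)) • Q

section Aux

open NormedSpace

attribute [local instance] Matrix.linftyOpNormedAddCommGroup Matrix.linftyOpNormedRing
  Matrix.linftyOpNormedAlgebra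

theorem hasDerivAt_matrix {f : ℝ → Matrix (Fin 3) (Fin 3) ℝ} {D : Matrix (Fin 3) (Fin 3) ℝ}
    {t : ℝ} :
    HasDerivAt f D t ↔ ∀ i j, HasDerivAt (fun s => f s i j) (D i j) t := by
  refine hasDerivAt_iff_tendsto_slope.trans ?_
  simp only [hasDerivAt_iff_tendsto_slope]
  refine tendsto_pi_nhds.trans ?_
  refine forall_congr' fun i => ?_
  refine tendsto_pi_nhds.trans ?_
  refine forall_congr' fun j => ?_
  have : ∀ s, slope f t s i j = slope (fun s => f s i j) t s := by
    intro s
    simp [slope_def_field, slope, Matrix.sub_apply, Matrix.smul_apply]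
  simp only [this]

lemma Wmat_transpose : Wmatᵀ = -Wmat := by
  ext i j
  fin_cases i <;> fin_cases j <;> simp [Wmat, Matrix.vecHead, Matrix.vecTail]

theorem stmt2_aux (a b c : ℝ) (Q : ℝ → Matrix (Fin 3) (Fin 3) ℝ)
    (hsymm : ∀ t, (Q t)ᵀ = Q t) (htr : ∀ t, Matrix.trace (Q t) = 0)
    (hQ : ∀ t : ℝ, ∀ i j : Fin 3, HasDerivAt (fun s => Q s i j)
      ((Wmat * Q t - Q t * Wmat - gradF a b c (Q t)) i j) t)
    (U : ℝ → Matrix (Fin 3) (Fin 3) ℝ)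
    (hU : ∀ t, U t = (NormedSpace.exp (t • Wmat))ᵀ * Q t * NormedSpace.exp (t • Wmat)) :
    ∀ t : ℝ, ∀ i j : Fin 3, HasDerivAt (fun s => U s i j) ((-(gradF a b c (U t))) i j) t := by
  intro t
  set B : ℝ → Matrix (Fin 3) (Fin 3) ℝ := fun s => exp (s • Wmat) with hBdef
  set C : ℝ → Matrix (Fin 3) (Fin 3) ℝ := fun s => exp (s • Wmatᵀ) with hCdef
  have hUC : ∀ s, U s = C s * Q s * B s := by
    intro s
    rw [hU s, hBdef, hCdef]
    rw [← Matrix.exp_transpose, Matrix.transpose_smul]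
  have hCB : ∀ s, C s * B s = 1 := by
    intro s
    simp only [hBdef, hCdef, Wmat_transpose, smul_neg]
    rw [← Matrix.exp_add_of_commute _ _ (Commute.refl (s • Wmat)).neg_left, neg_add_cancel, exp_zero]
  have hBC : ∀ s, B s * C s = 1 := by
    intro s
    simp only [hBdef, hCdef, Wmat_transpose, smul_neg]
    rw [← Matrix.exp_add_of_commute _ _ (Commute.refl (s • Wmat)).neg_right, add_neg_cancel, exp_zero]
  -- derivatives
  have hBd : HasDerivAt B (Wmat * B t) t := hasDerivAt_exp_smul_const' Wmat t
  have hCd : HasDerivAt C (C t * Wmatᵀ) t := hasDerivAt_exp_smul_const Wmatᵀ t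
  have hQd : HasDerivAt Q (Wmat * Q t - Q t * Wmat - gradF a b c (Q t)) t :=
    hasDerivAt_matrix.mpr (hQ t)
  have hprod := (hCd.mul hQd).mul hBd
  -- the derivative simplifies to -(C t * gradF a b c (Q t) * B t)
  have e1 : (C t * Wmatᵀ * Q t + C t * (Wmat * Q t - Q t * Wmat - gradF a b c (Q t))) * B t
      + C t * Q t * (Wmat * B t) = -(C t * gradF a b c (Q t) * B t) := by
    rw [Wmat_transpose]
    noncomm_ring
  rw [Pi.mul_apply, e1] at hprod
  -- conjugation identity for gradF
  have hUU : U t * U t = C t * (Q t * Q t) * B t := by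
    rw [hUC t]
    calc C t * Q t * B t * (C t * Q t * B t)
        = C t * Q t * (B t * C t) * (Q t * B t) := by noncomm_ring
      _ = C t * (Q t * Q t) * B t := by rw [hBC t, mul_one]; noncomm_ring
  have htrU : Matrix.trace (U t * U t) = Matrix.trace (Q t * Q t) := by
    rw [hUU, Matrix.trace_mul_cycle, hBC t, one_mul]
  have e2 : -(C t * gradF a b c (Q t) * B t) = -(gradF a b c (U t)) := by
    unfold gradF
    rw [htrU, hUU]
    rw [hUC t]
    simp only [mul_sub, sub_mul, mul_add, add_mul, mul_smul_comm, smul_mul_assoc, mul_one,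
      one_mul, mul_assoc, hCB t]
  rw [e2] at hprod
  have hfun : C * Q * B = U := funext fun s => (hUC s).symm
  rw [hfun] at hprod
  exact hasDerivAt_matrix.mp hprod

end Aux

theorem stmt2 (a b c : ℝ) (Q : ℝ → Matrix (Fin 3) (Fin 3) ℝ)
    (hsymm : ∀ t, (Q t)ᵀ = Q t) (htr : ∀ t, Matrix.trace (Q t) = 0)
    (hQ : ∀ t : ℝ, ∀ i j : Fin 3, HasDerivAt (fun s => Q s i j)
      ((Wmat * Q t - Q t * Wmat - gradF a b c (Q t)) i j) t)
    (U : ℝ → Matrix (Fin 3) (Fin 3) ℝ)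
    (hU : ∀ t, U t = (NormedSpace.exp (t • Wmat))ᵀ * Q t * NormedSpace.exp (t • Wmat)) :
    ∀ t : ℝ, ∀ i j : Fin 3, HasDerivAt (fun s => U s i j) ((-(gradF a b c (U t))) i j) t :=
  stmt2_aux a b c Q hsymm htr hQ U hU
end

section
/- If U is a real symmetric traceless 3×3 matrix with α := |U|² = tr(U²), then for every ε > 0, |tr(U³)| ≤ (3/2)((ε/4)α² + (1/ε)α). -/
open Matrix

lemma cs3' (x1 x2 x3 y1 y2 y3 : ℝ) :
    (x1*y1+x2*y2+x3*y3)^2 ≤ (x1^2+x2^2+x3^2)*(y1^2+y2^2+y3^2) := by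
  nlinarith [sq_nonneg (x1*y2-x2*y1), sq_nonneg (x1*y3-x3*y1), sq_nonneg (x2*y3-x3*y2)]

lemma cs6' (a b c d e f r1 r2 r3 m12 m13 m23 : ℝ) :
    (a*r1+b*r2+c*r3+2*d*m12+2*e*m13+2*f*m23)^2 ≤
      (a^2+b^2+c^2+2*d^2+2*e^2+2*f^2)*(r1^2+r2^2+r3^2+2*m12^2+2*m13^2+2*m23^2) := by
  nlinarith [sq_nonneg (a*r2-b*r1), sq_nonneg (a*r3-c*r1), sq_nonneg (b*r3-c*r2),
    sq_nonneg (a*m12-d*r1), sq_nonneg (a*m13-e*r1), sq_nonneg (a*m23-f*r1),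
    sq_nonneg (b*m12-d*r2), sq_nonneg (b*m13-e*r2), sq_nonneg (b*m23-f*r2),
    sq_nonneg (c*m12-d*r3), sq_nonneg (c*m13-e*r3), sq_nonneg (c*m23-f*r3),
    sq_nonneg (d*m13-e*m12), sq_nonneg (d*m23-f*m12), sq_nonneg (e*m23-f*m13)]

lemma key' (a b c d e f : ℝ) :
    (a*(a^2+d^2+e^2) + b*(d^2+b^2+f^2) + c*(e^2+f^2+c^2)
      + 2*d*(a*d+d*b+e*f) + 2*e*(a*e+d*f+e*c) + 2*f*(d*e+b*f+f*c))^2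
      ≤ (a^2+b^2+c^2+2*d^2+2*e^2+2*f^2)^3 := by
  set r1 : ℝ := a^2+d^2+e^2 with hr1
  set r2 : ℝ := d^2+b^2+f^2 with hr2
  set r3 : ℝ := e^2+f^2+c^2 with hr3
  set m12 : ℝ := a*d+d*b+e*f with hm12
  set m13 : ℝ := a*e+d*f+e*c with hm13
  set m23 : ℝ := d*e+b*f+f*c with hm23
  have h12 : m12^2 ≤ r1*r2 := cs3' a d e d b f
  have h13 : m13^2 ≤ r1*r3 := cs3' a d e e f c
  have h23 : m23^2 ≤ r2*r3 := cs3' d b f e f c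
  have hT : (a*r1+b*r2+c*r3+2*d*m12+2*e*m13+2*f*m23)^2 ≤
      (a^2+b^2+c^2+2*d^2+2*e^2+2*f^2)*(r1^2+r2^2+r3^2+2*m12^2+2*m13^2+2*m23^2) :=
    cs6' a b c d e f r1 r2 r3 m12 m13 m23
  have hSr : a^2+b^2+c^2+2*d^2+2*e^2+2*f^2 = r1 + r2 + r3 := by
    rw [hr1, hr2, hr3]; ring
  have hS0 : (0:ℝ) ≤ r1 + r2 + r3 := by rw [← hSr]; positivity
  have hQ : r1^2+r2^2+r3^2+2*m12^2+2*m13^2+2*m23^2 ≤ (r1+r2+r3)^2 := by nlinarith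
  calc (a*r1+b*r2+c*r3+2*d*m12+2*e*m13+2*f*m23)^2
      ≤ (a^2+b^2+c^2+2*d^2+2*e^2+2*f^2)*(r1^2+r2^2+r3^2+2*m12^2+2*m13^2+2*m23^2) := hT
    _ ≤ (r1+r2+r3)*(r1+r2+r3)^2 := by rw [hSr]; exact mul_le_mul_of_nonneg_left hQ hS0
    _ = (a^2+b^2+c^2+2*d^2+2*e^2+2*f^2)^3 := by rw [hSr]; ring

lemma fin' (T S ε : ℝ) (hε : 0 < ε) (hS : 0 ≤ S) (h : T^2 ≤ S^3) :
    |T| ≤ (3/2) * ((ε/4) * S^2 + (1/ε) * S) := by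
  have hR0 : 0 ≤ (3/2) * ((ε/4) * S^2 + (1/ε) * S) := by positivity
  have h1 : ε * (1/ε) = 1 := by field_simp
  have hR2 : S^3 ≤ ((3/2) * ((ε/4) * S^2 + (1/ε) * S))^2 := by
    nlinarith [sq_nonneg (ε*S^2), sq_nonneg ((1/ε)*S), mul_nonneg (mul_nonneg hS hS) hS, h1, hS]
  rw [abs_le]
  constructor <;> nlinarith [hR0, hR2, h]

theorem stmt4 (U : Matrix (Fin 3) (Fin 3) ℝ) (hsymm : Uᵀ = U)
    (htr : Matrix.trace U = 0) (α : ℝ) (hα : α = Matrix.trace (U * U)) :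
    ∀ ε : ℝ, 0 < ε →
      |Matrix.trace (U * U * U)| ≤ (3 / 2) * ((ε / 4) * α ^ 2 + (1 / ε) * α) := by
  intro ε hε
  have hs : ∀ i j, U j i = U i j := fun i j => congrFun (congrFun hsymm i) j
  set a := U 0 0; set b := U 1 1; set c := U 2 2
  set d := U 0 1; set e := U 0 2; set f := U 1 2
  have hT3 : Matrix.trace (U * U * U) =
      a*(a^2+d^2+e^2) + b*(d^2+b^2+f^2) + c*(e^2+f^2+c^2)
      + 2*d*(a*d+d*b+e*f) + 2*e*(a*e+d*f+e*c) + 2*f*(d*e+b*f+f*c) := by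
    simp only [Matrix.trace, Matrix.diag, Matrix.mul_apply, Fin.sum_univ_three]
    rw [hs 0 1, hs 0 2, hs 1 2]
    ring
  have hα' : α = a^2+b^2+c^2+2*d^2+2*e^2+2*f^2 := by
    rw [hα]
    simp only [Matrix.trace, Matrix.diag, Matrix.mul_apply, Fin.sum_univ_three]
    rw [hs 0 1, hs 0 2, hs 1 2]
    ring
  have hS0 : 0 ≤ α := by rw [hα']; positivity
  have hkey : (Matrix.trace (U * U * U))^2 ≤ α^3 := by
    rw [hT3, hα']; exact key' a b c d e f
  exact fin' _ _ _ hε hS0 hkey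
end

section
/- Let n ∈ ℝ³ be a unit vector and s a real number satisfying a·s - (b/3)·s² + (2c/3)·s³ = 0 (equivalently s = 0 or s = (b ± √(b²-24ac))/(4c)). Then Q := s(n⊗n - (1/3)Id) is a critical point of F, i.e. aQ - b(Q² - (1/3)|Q|² Id) + cQ|Q|² = 0. -/
open Matrix

set_option maxHeartbeats 2000000 in
theorem stmt8 (a b c : ℝ) (hc : 0 < c) (hdisc : 0 ≤ b ^ 2 - 24 * a * c)
    (n : Fin 3 → ℝ) (hn : n 0 ^ 2 + n 1 ^ 2 + n 2 ^ 2 = 1)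
    (s : ℝ) (hs : a * s - (b / 3) * s ^ 2 + (2 * c / 3) * s ^ 3 = 0)
    (Q : Matrix (Fin 3) (Fin 3) ℝ)
    (hQ : Q = s • (Matrix.of (fun i j => n i * n j)
      - (1 / 3 : ℝ) • (1 : Matrix (Fin 3) (Fin 3) ℝ))) :
    gradF a b c Q = 0 := by
  subst hQ
  set u : ℝ := n 0 ^ 2 + n 1 ^ 2 + n 2 ^ 2 with hu
  ext i j
  fin_cases i <;> fin_cases j <;>
    simp [gradF, Matrix.mul_apply, Matrix.trace, Fin.sum_univ_three, Matrix.one_apply] <;>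
    first
    | linear_combination (n 0 * n 0 - 1/3) * hs +
        (-b * s^2 * (n 0 * n 0) + b * s^2 * (u + 1/3) / 3
          + c * s^3 * (u + 1/3) * (n 0 * n 0 - 1/3)) * hn
    | linear_combination (n 1 * n 1 - 1/3) * hs +
        (-b * s^2 * (n 1 * n 1) + b * s^2 * (u + 1/3) / 3
          + c * s^3 * (u + 1/3) * (n 1 * n 1 - 1/3)) * hn
    | linear_combination (n 2 * n 2 - 1/3) * hs +
        (-b * s^2 * (n 2 * n 2) + b * s^2 * (u + 1/3) / 3
          + c * s^3 * (u + 1/3) * (n 2 * n 2 - 1/3)) * hn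
    | linear_combination (n 0 * n 1) * hs +
        (-b * s^2 * (n 0 * n 1) + c * s^3 * (u + 1/3) * (n 0 * n 1)) * hn
    | linear_combination (n 0 * n 2) * hs +
        (-b * s^2 * (n 0 * n 2) + c * s^3 * (u + 1/3) * (n 0 * n 2)) * hn
    | linear_combination (n 1 * n 0) * hs +
        (-b * s^2 * (n 1 * n 0) + c * s^3 * (u + 1/3) * (n 1 * n 0)) * hn
    | linear_combination (n 1 * n 2) * hs +
        (-b * s^2 * (n 1 * n 2) + c * s^3 * (u + 1/3) * (n 1 * n 2)) * hn
    | linear_combination (n 2 * n 0) * hs +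
        (-b * s^2 * (n 2 * n 0) + c * s^3 * (u + 1/3) * (n 2 * n 0)) * hn
    | linear_combination (n 2 * n 1) * hs +
        (-b * s^2 * (n 2 * n 1) + c * s^3 * (u + 1/3) * (n 2 * n 1)) * hn
end

section
/- Assume b, c > 0 and b² - 24ac > 0. Let s = (b + √(b²-24ac))/(4c) (or s = (b - √(b²-24ac))/(4c)), fix n₁, n₂ with n₁² + n₂² = 1 and let n(t) = (n₁cos t + n₂ sin t, -n₁ sin t + n₂ cos t, 0). Then Q(t) = s(n(t)⊗n(t) - (1/3)Id) is a periodic solution of dQ/dt = [W,Q] - (aQ - b(Q² - (1/3)|Q|²Id) + cQ|Q|²), with period 2π. -/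
open Matrix Real

theorem stmt9 (a b c : ℝ) (hb : 0 < b) (hc : 0 < c) (hdisc : 0 < b ^ 2 - 24 * a * c)
    (s : ℝ)
    (hs : s = (b + Real.sqrt (b ^ 2 - 24 * a * c)) / (4 * c) ∨
          s = (b - Real.sqrt (b ^ 2 - 24 * a * c)) / (4 * c))
    (n₁ n₂ : ℝ) (hn : n₁ ^ 2 + n₂ ^ 2 = 1)
    (n : ℝ → Fin 3 → ℝ)
    (hn' : ∀ t, n t = ![n₁ * Real.cos t + n₂ * Real.sin t,
                       -n₁ * Real.sin t + n₂ * Real.cos t, 0])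
    (Q : ℝ → Matrix (Fin 3) (Fin 3) ℝ)
    (hQ : ∀ t, Q t = s • (Matrix.of (fun i j => n t i * n t j)
      - (1 / 3 : ℝ) • (1 : Matrix (Fin 3) (Fin 3) ℝ))) :
    (∀ t : ℝ, ∀ i j : Fin 3, HasDerivAt (fun u => Q u i j)
      ((Wmat * Q t - Q t * Wmat - gradF a b c (Q t)) i j) t) ∧
    (∀ t : ℝ, Q (t + 2 * Real.pi) = Q t) := by
  have hd : Real.sqrt (b ^ 2 - 24 * a * c) ^ 2 = b ^ 2 - 24 * a * c :=
    Real.sq_sqrt hdisc.le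
  have hroot : 2 * c * s ^ 2 - b * s + 3 * a = 0 := by
    rcases hs with h | h <;> rw [h] <;> field_simp <;> nlinarith [hd, Real.sq_sqrt (show (0:ℝ) ≤ b ^ 2 - c * 24 * a by nlinarith)]
  constructor
  · intro t i j
    have hp2 : n t 0 ^ 2 + n t 1 ^ 2 = 1 := by
      rw [hn']
      simp only [Matrix.cons_val_zero, Matrix.cons_val_one, Matrix.head_cons]
      linear_combination (Real.sin t ^ 2 + Real.cos t ^ 2) * hn + Real.sin_sq_add_cos_sq t
    have h2z : n t 2 = 0 := by rw [hn']; simp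
    set P : Matrix (Fin 3) (Fin 3) ℝ := Matrix.of (fun i j => n t i * n t j) with hP
    have hPP : P * P = P := by
      ext i j
      simp only [hP, Matrix.mul_apply, Fin.sum_univ_three, Matrix.of_apply]
      linear_combination (n t i * n t j) * hp2 + (n t i * n t j * n t 2) * h2z
    have hT : Matrix.trace P = 1 := by
      simp only [hP, Matrix.trace, Matrix.diag, Matrix.of_apply, Fin.sum_univ_three]
      linear_combination hp2 + n t 2 * h2z
    have hQt : Q t = s • P - (s * (1 / 3 : ℝ)) • 1 := by
      rw [hQ t, smul_sub, smul_smul]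
    have hQQ : Q t * Q t = (s ^ 2 * (1 / 3 : ℝ)) • P + (s ^ 2 * (1 / 9 : ℝ)) • 1 := by
      rw [hQt]
      simp only [sub_mul, mul_sub, smul_mul_assoc, mul_smul_comm, hPP, mul_one, one_mul,
        smul_smul]
      module
    have htrQQ : Matrix.trace (Q t * Q t) = 2 / 3 * s ^ 2 := by
      rw [hQQ]
      simp only [Matrix.trace_add, Matrix.trace_smul, hT, Matrix.trace_one]
      simp [smul_eq_mul]
      ring
    have hgrad : gradF a b c (Q t) = 0 := by
      rw [gradF, htrQQ, hQQ, hQt]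
      match_scalars
      · linear_combination (s / 3) * hroot
      · linear_combination (-s / 9) * hroot
    have hp : HasDerivAt (fun u => n₁ * Real.cos u + n₂ * Real.sin u)
        (-n₁ * Real.sin t + n₂ * Real.cos t) t := by
      have h1 := (Real.hasDerivAt_cos t).const_mul n₁
      have h2 := (Real.hasDerivAt_sin t).const_mul n₂
      exact (h1.add h2).congr_deriv (by ring)
    have hq : HasDerivAt (fun u => -n₁ * Real.sin u + n₂ * Real.cos u)
        (-(n₁ * Real.cos t + n₂ * Real.sin t)) t := by
      have h1 := (Real.hasDerivAt_sin t).const_mul (-n₁)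
      have h2 := (Real.hasDerivAt_cos t).const_mul n₂
      exact (h1.add h2).congr_deriv (by ring)
    have hd0 : HasDerivAt (fun u => n u 0) (n t 1) t := by
      have e0 : (fun u => n u (0 : Fin 3)) = fun u => n₁ * Real.cos u + n₂ * Real.sin u := by
        funext u; rw [hn']; simp
      have e1 : n t 1 = -n₁ * Real.sin t + n₂ * Real.cos t := by rw [hn']; simp
      rw [e0, e1]; exact hp
    have hd1 : HasDerivAt (fun u => n u 1) (-(n t 0)) t := by
      have e0 : (fun u => n u (1 : Fin 3)) = fun u => -n₁ * Real.sin u + n₂ * Real.cos u := by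
        funext u; rw [hn']; simp
      have e1 : (-(n t 0) : ℝ) = -(n₁ * Real.cos t + n₂ * Real.sin t) := by rw [hn']; simp
      rw [e0, e1]; exact hq
    have hd2 : HasDerivAt (fun u => n u 2) 0 t := by
      have e0 : (fun u => n u (2 : Fin 3)) = fun _ => (0 : ℝ) := by
        funext u; rw [hn']; simp
      rw [e0]; exact hasDerivAt_const t 0
    have hder : ∀ k : Fin 3, HasDerivAt (fun u => n u k) (![n t 1, -(n t 0), 0] k) t := by
      intro k
      fin_cases k
      · exact hd0
      · exact hd1
      · exact hd2
    have hQe : ∀ i j : Fin 3, Q t i j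
        = s * (n t i * n t j - (1 / 3 : ℝ) * (1 : Matrix (Fin 3) (Fin 3) ℝ) i j) := by
      intro i j
      rw [hQ t]
      simp [Matrix.sub_apply, Matrix.smul_apply, Matrix.of_apply, smul_eq_mul]
    have hij : HasDerivAt (fun u => Q u i j)
        (s * ((![n t 1, -(n t 0), 0] i) * n t j + n t i * (![n t 1, -(n t 0), 0] j))) t := by
      have hfun : (fun u => Q u i j)
          = fun u => s * (n u i * n u j - (1 / 3 : ℝ) * (1 : Matrix (Fin 3) (Fin 3) ℝ) i j) := by
        funext u
        rw [hQ u]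
        simp [Matrix.sub_apply, Matrix.smul_apply, Matrix.of_apply, smul_eq_mul]
      rw [hfun]
      exact (((hder i).mul (hder j)).sub_const _).const_mul s
    have hWQ : Wmat * Q t - Q t * Wmat
        = Matrix.of (fun i j => s * ((![n t 1, -(n t 0), 0] i) * n t j
            + n t i * (![n t 1, -(n t 0), 0] j))) := by
      ext i j
      simp only [Matrix.sub_apply, Matrix.mul_apply, Fin.sum_univ_three, Matrix.of_apply]
      fin_cases i <;> fin_cases j <;>
        simp [Wmat, hQe, h2z, Matrix.one_apply, Matrix.vecHead, Matrix.vecTail, Function.comp] <;> ring_nf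
    have hmat : (Wmat * Q t - Q t * Wmat - gradF a b c (Q t)) i j
        = s * ((![n t 1, -(n t 0), 0] i) * n t j + n t i * (![n t 1, -(n t 0), 0] j)) := by
      rw [hgrad, sub_zero, hWQ]
      rfl
    rw [hmat]
    exact hij
  · intro t
    rw [hQ, hQ, hn', hn']
    simp [Real.cos_add_two_pi, Real.sin_add_two_pi]
end

section
/- The functions H₁(x,y,z) = (1-6y)/(6(1-6x)) and H₂(x,y,z) = (1+6x+6y-12z²)/(36(1-6x)²) are first integrals of the system x' = (2/3)(1-6x)z, y' = (2/3)(1-6y)z, z' = 2/3 + x + y - 4z², on the region x ≠ 1/6; i.e., along any solution (x(t),y(t),z(t)) with x(t) ≠ 1/6, the quantities H₁ and H₂ are constant in time. -/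
lemma const_of_deriv_zero {f : ℝ → ℝ} (h : ∀ t, HasDerivAt f 0 t) :
    ∀ a b : ℝ, f a = f b := fun a b =>
  is_const_of_deriv_eq_zero (fun t => (h t).differentiableAt)
    (fun t => (h t).deriv) a b

theorem stmt12 (x y z : ℝ → ℝ)
    (hx : ∀ t, HasDerivAt x ((2 / 3) * (1 - 6 * x t) * z t) t)
    (hy : ∀ t, HasDerivAt y ((2 / 3) * (1 - 6 * y t) * z t) t)
    (hz : ∀ t, HasDerivAt z (2 / 3 + x t + y t - 4 * (z t) ^ 2) t)
    (hne : ∀ t, x t ≠ 1 / 6) :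
    (∀ t₁ t₂ : ℝ,
      (1 - 6 * y t₁) / (6 * (1 - 6 * x t₁)) = (1 - 6 * y t₂) / (6 * (1 - 6 * x t₂))) ∧
    (∀ t₁ t₂ : ℝ,
      (1 + 6 * x t₁ + 6 * y t₁ - 12 * (z t₁) ^ 2) / (36 * (1 - 6 * x t₁) ^ 2) =
      (1 + 6 * x t₂ + 6 * y t₂ - 12 * (z t₂) ^ 2) / (36 * (1 - 6 * x t₂) ^ 2)) := by
  have hx6 : ∀ t, (1 : ℝ) - 6 * x t ≠ 0 := by
    intro t h
    apply hne t
    linarith [h]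
  constructor
  · apply const_of_deriv_zero
    intro t
    have hn : HasDerivAt (fun t => 1 - 6 * y t)
        (0 - 6 * ((2 / 3) * (1 - 6 * y t) * z t)) t :=
      (hasDerivAt_const t (1 : ℝ)).sub ((hy t).const_mul 6)
    have hd : HasDerivAt (fun t => 6 * (1 - 6 * x t))
        (6 * (0 - 6 * ((2 / 3) * (1 - 6 * x t) * z t))) t :=
      (((hasDerivAt_const t (1 : ℝ)).sub ((hx t).const_mul 6)).const_mul 6)
    have hd0 : 6 * (1 - 6 * x t) ≠ 0 := by
      exact mul_ne_zero (by norm_num) (hx6 t)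
    have hq := hn.div hd hd0
    refine hq.congr_deriv ?_
    rw [div_eq_zero_iff]; left
    ring
  · apply const_of_deriv_zero
    intro t
    have hn : HasDerivAt (fun t => 1 + 6 * x t + 6 * y t - 12 * (z t) ^ 2)
        (0 + 6 * ((2 / 3) * (1 - 6 * x t) * z t) + 6 * ((2 / 3) * (1 - 6 * y t) * z t)
          - 12 * (2 * z t ^ 1 * (2 / 3 + x t + y t - 4 * (z t) ^ 2))) t := by
      exact (((hasDerivAt_const t (1 : ℝ)).add ((hx t).const_mul 6)).add
        ((hy t).const_mul 6)).sub (((hz t).pow 2).const_mul 12)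
    have hd : HasDerivAt (fun t => 36 * (1 - 6 * x t) ^ 2)
        (36 * (2 * (1 - 6 * x t) ^ 1 * (0 - 6 * ((2 / 3) * (1 - 6 * x t) * z t)))) t :=
      ((((hasDerivAt_const t (1 : ℝ)).sub ((hx t).const_mul 6)).pow 2).const_mul 36)
    have hd0 : 36 * (1 - 6 * x t) ^ 2 ≠ 0 := by
      have := hx6 t; positivity
    have hq := hn.div hd hd0
    refine hq.congr_deriv ?_
    rw [div_eq_zero_iff]; left
    ring
end
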